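/- Let ℓ ∈ ℕ₀ and define ψ̃_ℓ : ℝ → ℂ by ψ̃_ℓ(t) = (1+it)^{2ℓ} · 2·𝟙_{[-1,1]}(t). Then for every w ∈ ℝ one has (Fψ̃_ℓ)(w) = √(8/π) · Σ_{n=0}^{2ℓ} binomial(2ℓ, n) · (−1)^n · (d^n/dw^n) sinc(w), where the n-th derivative is the n-th iterated derivative of sinc at w. -/

import Mathlib

open MeasureTheory Finset

/-- `sinc x = sin x / x` for `x ≠ 0`, `sinc 0 = 1`. -/
noncomputable def sinc (x : ℝ) : ℝ := if x = 0 then 1 else Real.sin x / x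

/-- `ψ̃_ℓ(t) = (1+it)^{2ℓ} · 2·𝟙_{[-1,1]}(t)`. -/
noncomputable def psiTilde (ℓ : ℕ) (t : ℝ) : ℂ :=
  (1 + Complex.I * t) ^ (2 * ℓ) * (if t ∈ Set.Icc (-1 : ℝ) 1 then 2 else 0)

namespace Stmt1Aux

open Complex FourierTransform Real

noncomputable def hInd : ℝ → ℂ := Set.indicator (Set.Icc (-1:ℝ) 1) (fun _ => 1)

noncomputable def Fint : ℝ → ℂ := fun w => ∫ t : ℝ, hInd t * Complex.exp (-(Complex.I * t * w))

lemma deriv_ofReal_comp (f : ℝ → ℝ) (x : ℝ) :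
    deriv (fun x => ((f x : ℝ) : ℂ)) x = ((deriv f x : ℝ) : ℂ) := by
  by_cases hd : DifferentiableAt ℝ f x
  · exact hd.hasDerivAt.ofReal_comp.deriv
  · have h2 : ¬ DifferentiableAt ℝ (fun x => ((f x : ℝ) : ℂ)) x := by
      intro h
      apply hd
      have := (Complex.reCLM.differentiableAt (x := ((f x : ℝ) : ℂ))).comp x h
      simpa [Function.comp_def] using this
    rw [deriv_zero_of_not_differentiableAt hd, deriv_zero_of_not_differentiableAt h2,
      Complex.ofReal_zero]

lemma iteratedDeriv_ofReal_comp (n : ℕ) (f : ℝ → ℝ) :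
    iteratedDeriv n (fun x => ((f x : ℝ) : ℂ)) = fun x => ((iteratedDeriv n f x : ℝ) : ℂ) := by
  induction n with
  | zero => simp
  | succ n ih => funext x; rw [iteratedDeriv_succ, ih, iteratedDeriv_succ, deriv_ofReal_comp]

lemma intInd (n : ℕ) : Integrable (fun t : ℝ => t ^ n • hInd t) := by
  have : (fun t : ℝ => t ^ n • hInd t)
      = Set.indicator (Set.Icc (-1:ℝ) 1) (fun t => ((t : ℂ)) ^ n) := by
    funext t
    simp only [hInd, Set.indicator]
    split <;> simp [Complex.real_smul]
  rw [this]
  exact ((Complex.continuous_ofReal.pow n).continuousOn.integrableOn_Icc).integrable_indicator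
    measurableSet_Icc

lemma hF (w : ℝ) : Fint w = 𝓕 hInd (w / (2 * π)) := by
  rw [Real.fourier_eq']
  unfold Fint
  congr 1
  funext t
  rw [smul_eq_mul, mul_comm]
  congr 1
  have hπ : (π : ℂ) ≠ 0 := by exact_mod_cast Real.pi_ne_zero
  congr 1
  push_cast
  rw [RCLike.inner_apply, conj_trivial]
  push_cast
  field_simp

lemma hFval (w : ℝ) : Fint w = 2 * ((_root_.sinc w : ℝ) : ℂ) := by
  have h2 : Fint w = ∫ t in (-1:ℝ)..1, Complex.exp (-(Complex.I * t * w)) := by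
    unfold Fint
    have he : (fun t : ℝ => hInd t * Complex.exp (-(Complex.I * t * w)))
        = Set.indicator (Set.Icc (-1:ℝ) 1) (fun t => Complex.exp (-(Complex.I * t * w))) := by
      funext t
      by_cases ht : t ∈ Set.Icc (-1:ℝ) 1 <;> simp [hInd, Set.indicator, ht]
    rw [he, integral_indicator measurableSet_Icc,
      intervalIntegral.integral_of_le (by norm_num : (-1:ℝ) ≤ 1), integral_Icc_eq_integral_Ioc]
  by_cases hw : w = 0
  · subst hw
    simp [h2, _root_.sinc]
    norm_num
  · have hc : -(Complex.I * w) ≠ 0 := by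
      simp [Complex.I_ne_zero, Complex.ofReal_eq_zero, hw]
    have h3 : Fint w = (Complex.exp (-(Complex.I * w) * (1:ℝ))
        - Complex.exp (-(Complex.I * w) * ((-1:ℝ) : ℝ))) / (-(Complex.I * w)) := by
      rw [h2, show (fun t : ℝ => Complex.exp (-(Complex.I * t * w)))
          = fun t : ℝ => Complex.exp (-(Complex.I * w) * t) from funext fun t => by ring_nf,
        integral_exp_mul_complex hc]
    rw [h3, _root_.sinc, if_neg hw]
    have hsin : Complex.exp (-(Complex.I * w) * (1:ℝ))
        - Complex.exp (-(Complex.I * w) * ((-1:ℝ) : ℝ)) = -2 * Complex.I * Complex.sin w := by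
      rw [Complex.sin]
      push_cast
      field_simp
      ring_nf
      rw [Complex.I_sq]
      ring
    rw [hsin]
    push_cast
    rw [← Complex.ofReal_sin]
    have hw' : (w : ℂ) ≠ 0 := by exact_mod_cast hw
    field_simp

lemma intInd' (n : ℕ) : Integrable (fun t : ℝ => ‖t‖ ^ n * ‖hInd t‖) := by
  have := (intInd n).norm
  apply this.congr
  filter_upwards with t
  simp [norm_smul, abs_pow]

lemma hFeq : Fint = fun w => 𝓕 hInd ((2 * π)⁻¹ * w) := by
  funext w; rw [hF, div_eq_inv_mul]

lemma contDiff_FT (N : ℕ∞) : ContDiff ℝ N (𝓕 hInd) :=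
  Real.contDiff_fourier (fun n _ => intInd' n)

lemma contDiff_Fint (N : ℕ∞) : ContDiff ℝ N Fint := by
  rw [hFeq]
  exact (contDiff_FT N).comp (contDiff_const.mul contDiff_id)

lemma hFderiv (n : ℕ) (w : ℝ) :
    iteratedDeriv n Fint w
      = ∫ t : ℝ, ((-Complex.I * t) ^ n * hInd t) * Complex.exp (-(Complex.I * t * w)) := by
  have hsm : ContDiff ℝ (n : ℕ∞) (𝓕 hInd) := contDiff_FT n
  rw [hFeq, iteratedDeriv_comp_const_smul hsm,
    Real.iteratedDeriv_fourier (f := hInd) (N := n) (fun k _ => intInd k) le_rfl]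
  simp only
  rw [Real.fourier_eq', ← integral_smul]
  congr 1
  funext t
  simp only [smul_eq_mul, Complex.real_smul, RCLike.inner_apply, conj_trivial]
  have hπ : (π : ℂ) ≠ 0 := by exact_mod_cast Real.pi_ne_zero
  have h1 : (↑(-2 * π * ((2*π)⁻¹ * w * t)) * Complex.I : ℂ) = -(Complex.I * t * w) := by
    push_cast
    field_simp
  rw [h1]
  push_cast
  calc ((2*π)⁻¹:ℂ)^n * (Complex.exp (-(Complex.I * t * w)) * ((-2*↑π*Complex.I*↑t)^n * hInd t))
      = (((2*π)⁻¹:ℂ)^n * (-2*↑π*Complex.I*↑t)^n) * hInd t * Complex.exp (-(Complex.I * t * w)) := by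
        ring
    _ = _ := by
        rw [show (((2*π)⁻¹:ℂ))^n * (-2*↑π*Complex.I*↑t)^n = (-Complex.I*↑t)^n from by
          rw [← mul_pow]; congr 1; field_simp]

lemma contDiff_sinc (N : ℕ∞) : ContDiff ℝ N _root_.sinc := by
  have h : _root_.sinc = fun w => (Fint w).re / 2 := by
    funext w; rw [hFval]; simp
  rw [h]
  exact (Complex.reCLM.contDiff.comp (contDiff_Fint N)).div_const 2

lemma key (n : ℕ) (w : ℝ) :
    (∫ t : ℝ, ((-Complex.I * t) ^ n * hInd t) * Complex.exp (-(Complex.I * t * w)))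
      = 2 * ((iteratedDeriv n _root_.sinc w : ℝ) : ℂ) := by
  rw [← hFderiv]
  have hFo : Fint = fun w => (((2 * _root_.sinc w : ℝ)) : ℂ) := by
    funext w; rw [hFval]; push_cast; ring
  rw [hFo, iteratedDeriv_ofReal_comp]
  have h2 : (fun w => 2 * _root_.sinc w) = (2:ℝ) • _root_.sinc := by funext x; simp [smul_eq_mul]
  have h3 : iteratedDeriv n (fun w => 2 * _root_.sinc w) w = 2 * iteratedDeriv n _root_.sinc w := by
    rw [h2, iteratedDeriv_eq_iteratedFDeriv, iteratedDeriv_eq_iteratedFDeriv,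
      iteratedFDeriv_const_smul_apply (contDiff_sinc n).contDiffAt]
    simp
  show ((iteratedDeriv n (fun w => 2 * _root_.sinc w) w : ℝ) : ℂ) = _
  rw [h3]
  push_cast
  ring

end Stmt1Aux

theorem stmt_1 (ℓ : ℕ) (w : ℝ) :
    (1 / (Real.sqrt (2 * Real.pi) : ℂ)) *
        ∫ t : ℝ, psiTilde ℓ t * Complex.exp (-(Complex.I * t * w)) =
      (Real.sqrt (8 / Real.pi) : ℂ) *
        ∑ n ∈ Finset.range (2 * ℓ + 1),
          (Nat.choose (2 * ℓ) n : ℂ) * (-1 : ℂ) ^ n * ((iteratedDeriv n sinc w : ℝ) : ℂ) := by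
  classical
  open Stmt1Aux in
  have hintg : ∀ t : ℝ, psiTilde ℓ t * Complex.exp (-(Complex.I * t * w))
      = ∑ n ∈ Finset.range (2 * ℓ + 1), (Nat.choose (2 * ℓ) n : ℂ) * 2 * (-1:ℂ)^n *
          (((-Complex.I * t) ^ n * hInd t) * Complex.exp (-(Complex.I * t * w))) := by
    intro t
    unfold psiTilde
    have h0 : (if t ∈ Set.Icc (-1:ℝ) 1 then (2:ℂ) else 0) = 2 * hInd t := by
      simp only [hInd, Set.indicator]
      split <;> simp
    rw [h0, show ((1:ℂ) + Complex.I * t) = (Complex.I * t + 1) from by ring, add_pow]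
    rw [Finset.sum_mul, Finset.sum_mul]
    refine Finset.sum_congr rfl fun k hk => ?_
    have hkk : (-1:ℂ)^k * (-Complex.I * t)^k = (Complex.I * t)^k := by
      rw [← mul_pow]; congr 1; ring
    rw [← hkk]
    ring
  have hInt : ∀ k ∈ Finset.range (2 * ℓ + 1),
      Integrable (fun t : ℝ => (Nat.choose (2 * ℓ) k : ℂ) * 2 * (-1:ℂ)^k *
        (((-Complex.I * t) ^ k * hInd t) * Complex.exp (-(Complex.I * t * w)))) := by
    intro k _
    apply Integrable.const_mul
    have base : Integrable (fun t : ℝ => (-Complex.I * t) ^ k * hInd t) := by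
      have h := (Stmt1Aux.intInd k).const_mul ((-Complex.I) ^ k)
      apply h.congr
      filter_upwards with t
      rw [Complex.real_smul, mul_pow]
      push_cast
      ring
    have hb : ∀ t : ℝ, ‖Complex.exp (-(Complex.I * t * w))‖ ≤ 1 := by
      intro t
      rw [Complex.norm_exp]
      norm_num [Complex.mul_re, Complex.mul_im]
    have hm : AEStronglyMeasurable (fun t : ℝ => Complex.exp (-(Complex.I * t * w))) := by
      apply Continuous.aestronglyMeasurable
      continuity
    have := base.bdd_mul (c := 1) hm (ae_of_all _ hb)
    apply this.congr
    filter_upwards with t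
    ring
  rw [show (fun t : ℝ => psiTilde ℓ t * Complex.exp (-(Complex.I * t * w)))
      = fun t : ℝ => ∑ n ∈ Finset.range (2 * ℓ + 1), (Nat.choose (2 * ℓ) n : ℂ) * 2 * (-1:ℂ)^n *
          (((-Complex.I * t) ^ n * hInd t) * Complex.exp (-(Complex.I * t * w)))
      from funext hintg]
  rw [integral_finset_sum _ hInt]
  have hterm : ∀ k ∈ Finset.range (2 * ℓ + 1),
      (∫ t : ℝ, (Nat.choose (2 * ℓ) k : ℂ) * 2 * (-1:ℂ)^k *
        (((-Complex.I * t) ^ k * hInd t) * Complex.exp (-(Complex.I * t * w))))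
      = (Nat.choose (2 * ℓ) k : ℂ) * 2 * (-1:ℂ)^k *
          (2 * ((iteratedDeriv k sinc w : ℝ) : ℂ)) := by
    intro k _
    rw [integral_const_mul, Stmt1Aux.key]
  rw [Finset.sum_congr rfl hterm, Finset.mul_sum, Finset.mul_sum]
  refine Finset.sum_congr rfl fun k _ => ?_
  have hs : Real.sqrt (8 / Real.pi) * Real.sqrt (2 * Real.pi) = 4 := by
    rw [← Real.sqrt_mul (by positivity)]
    rw [show 8 / Real.pi * (2 * Real.pi) = 16 from by
      field_simp; ring]
    rw [show (16:ℝ) = 4^2 from by norm_num, Real.sqrt_sq (by norm_num)]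
  have h4 : ((Real.sqrt (8 / Real.pi) : ℝ) : ℂ) * ((Real.sqrt (2 * Real.pi) : ℝ) : ℂ) = 4 := by
    rw [← Complex.ofReal_mul, hs]
    norm_num
  have hne : ((Real.sqrt (2 * Real.pi) : ℝ) : ℂ) ≠ 0 := by
    rw [Complex.ofReal_ne_zero]
    positivity
  rw [one_div, inv_mul_eq_div, div_eq_iff hne]
  linear_combination (-((Nat.choose (2 * ℓ) k : ℂ) * (-1:ℂ)^k *
    ((iteratedDeriv k sinc w : ℝ) : ℂ))) * h4
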